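/- Let (f, φ) : A ⇄ B be a split opfibration. Let DA be the category Σ (a : A), Over a (the disjoint union of the slice categories of A, whose objects are morphisms w : a' ⟶ a of A, and whose morphisms from w₁ : a' ⟶ a to w₂ : a'' ⟶ a are morphisms u : a' ⟶ a'' with w₂ ∘ u = w₁), let DB be defined analogously from B, and let Df : DA ⥤ DB be the functor sending the slice component over a to the slice component over f.obj a by applying f (componentwise Over.post f). Then Df carries a delta lens structure: for an object w : a' ⟶ a of DA and a morphism of DB out of Df(w), given by v : f.obj a' ⟶ b together with target object m : b ⟶ f.obj a satisfying m ∘ v = f.map w, the chosen lift is the triangle formed by φ(a', v) : a' ⟶ p(a',v) and the unique morphism w₂ : p(a',v) ⟶ a with w₂ ∘ φ(a',v) = w and f.map w₂ = m modulo the identification f.obj p(a',v) = b; this lifting satisfies the delta lens axioms for Df. -/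

import Mathlib

open CategoryTheory

/-- A delta lens `(f, φ) : A ⇄ B`. -/
structure DeltaLens (A B : Type*) [Category A] [Category B] where
  f : A ⥤ B
  p : ∀ (a : A) (b : B), (f.obj a ⟶ b) → A
  lift : ∀ (a : A) (b : B) (u : f.obj a ⟶ b), a ⟶ p a b u
  f_p : ∀ (a : A) (b : B) (u : f.obj a ⟶ b), f.obj (p a b u) = b
  f_lift : ∀ (a : A) (b : B) (u : f.obj a ⟶ b), f.map (lift a b u) ≫ eqToHom (f_p a b u) = u
  p_id : ∀ a : A, p a (f.obj a) (𝟙 (f.obj a)) = a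
  lift_id : ∀ a : A, lift a (f.obj a) (𝟙 (f.obj a)) ≫ eqToHom (p_id a) = 𝟙 a
  p_comp : ∀ (a : A) (b b' : B) (u : f.obj a ⟶ b) (v : b ⟶ b'),
    p a b' (u ≫ v) = p (p a b u) b' (eqToHom (f_p a b u) ≫ v)
  lift_comp : ∀ (a : A) (b b' : B) (u : f.obj a ⟶ b) (v : b ⟶ b'),
    lift a b' (u ≫ v) ≫ eqToHom (p_comp a b b' u v) =
      lift a b u ≫ lift (p a b u) b' (eqToHom (f_p a b u) ≫ v)

/-- A delta lens is a split opfibration when every chosen lift is `f`-opcartesian: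
for every `u : f.obj a ⟶ b`, `w : a ⟶ a'` and `v : b ⟶ f.obj a'` with `u ≫ v = f.map w`
there is a unique `ψ : p a b u ⟶ a'` over `v` with `lift a b u ≫ ψ = w`. -/
def DeltaLens.IsSplitOpfibration {A B : Type*} [Category A] [Category B]
    (L : DeltaLens A B) : Prop :=
  ∀ (a : A) (b : B) (u : L.f.obj a ⟶ b) (a' : A) (w : a ⟶ a') (v : b ⟶ L.f.obj a'),
    u ≫ v = L.f.map w →
      ∃! ψ : L.p a b u ⟶ a',
        L.f.map ψ = eqToHom (L.f_p a b u) ≫ v ∧ L.lift a b u ≫ ψ = w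

variable {A B : Type*} [Category A] [Category B]

/-- The right décalage `DA` of a category `A`: the disjoint union of the slice
categories of `A`. Objects are morphisms `hom : src ⟶ base` of `A`. -/
structure Dec (A : Type*) [Category A] where
  base : A
  src : A
  hom : src ⟶ base

/-- Morphisms of `DA` from `w₁ : a' ⟶ a` to `w₂ : a'' ⟶ a` are morphisms
`u : a' ⟶ a''` with `w₂ ∘ u = w₁` (there are no morphisms between different slice
components). -/
instance decQuiver : Quiver (Dec A) where
  Hom x y := { u : x.src ⟶ y.src // ∃ h : x.base = y.base, u ≫ y.hom ≫ eqToHom h.symm = x.hom }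

instance decCategoryStruct : CategoryStruct (Dec A) where
  id x := ⟨𝟙 x.src, ⟨rfl, by simp⟩⟩
  comp {x y z} u v := ⟨u.1 ≫ v.1, by
    obtain ⟨h₁, e₁⟩ := u.2
    obtain ⟨h₂, e₂⟩ := v.2
    refine ⟨h₁.trans h₂, ?_⟩
    calc (u.1 ≫ v.1) ≫ z.hom ≫ eqToHom (h₁.trans h₂).symm
        = u.1 ≫ (v.1 ≫ z.hom ≫ eqToHom h₂.symm) ≫ eqToHom h₁.symm := by simp
      _ = u.1 ≫ y.hom ≫ eqToHom h₁.symm := by rw [e₂]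
      _ = x.hom := e₁⟩

instance decCategory : Category (Dec A) where
  id_comp u := Subtype.ext (Category.id_comp u.1)
  comp_id u := Subtype.ext (Category.comp_id u.1)
  assoc u v w := Subtype.ext (Category.assoc u.1 v.1 w.1)

/-- The right décalage of a functor, `Df : DA ⥤ DB`, acting componentwise on the slice
categories (by postcomposition with `f` on each slice). -/
def DecMap (f : A ⥤ B) : Dec A ⥤ Dec B where
  obj x := ⟨f.obj x.base, f.obj x.src, f.map x.hom⟩
  map {x y} u := ⟨f.map u.1, by
    obtain ⟨h, e⟩ := u.2
    refine ⟨congrArg f.obj h, ?_⟩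
    have e' := congrArg f.map e
    simpa [eqToHom_map] using e'⟩
  map_id x := Subtype.ext (f.map_id x.src)
  map_comp u v := Subtype.ext (f.map_comp u.1 v.1)

/-- The unique fill-in morphism `w₂ : p(a', v) ⟶ a` with `w₂ ∘ φ(a', v) = w`, lying
over `m`, obtained from the split opfibration property. -/
noncomputable def decChosen (L : DeltaLens A B) (hL : L.IsSplitOpfibration)
    (x : Dec A) (y : Dec B) (u : (DecMap L.f).obj x ⟶ y) :
    L.p x.src y.src u.1 ⟶ x.base :=
  Classical.choose
    (hL x.src y.src u.1 x.base x.hom (y.hom ≫ eqToHom u.2.choose.symm) u.2.choose_spec)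

theorem decChosen_comp (L : DeltaLens A B) (hL : L.IsSplitOpfibration)
    (x : Dec A) (y : Dec B) (u : (DecMap L.f).obj x ⟶ y) :
    L.lift x.src y.src u.1 ≫ decChosen L hL x y u = x.hom :=
  (Classical.choose_spec
    (hL x.src y.src u.1 x.base x.hom (y.hom ≫ eqToHom u.2.choose.symm)
      u.2.choose_spec)).1.2

/-- The chosen codomain for the delta lens structure on `Df` obtained from a split
opfibration `(f, φ)`: given an object `w : a' ⟶ a` of `DA` and a morphism of `DB` out
of `Df w`, given by `v : f.obj a' ⟶ b` together with the target object `m : b ⟶ f.obj a`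
satisfying `m ∘ v = f.map w`, the codomain is the object `w₂ : p(a', v) ⟶ a` of `DA`
given by the unique fill-in morphism. -/
noncomputable def decP (L : DeltaLens A B) (hL : L.IsSplitOpfibration)
    (x : Dec A) (y : Dec B) (u : (DecMap L.f).obj x ⟶ y) : Dec A :=
  ⟨x.base, L.p x.src y.src u.1, decChosen L hL x y u⟩

/-- The chosen lift for the delta lens structure on `Df`: the commutative triangle
formed by `φ(a', v) : a' ⟶ p(a', v)` over the given morphism of `DB`. -/
noncomputable def decLift (L : DeltaLens A B) (hL : L.IsSplitOpfibration)
    (x : Dec A) (y : Dec B) (u : (DecMap L.f).obj x ⟶ y) : x ⟶ decP L hL x y u :=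
  ⟨L.lift x.src y.src u.1, ⟨rfl, by
    show L.lift x.src y.src u.1 ≫ decChosen L hL x y u ≫ eqToHom (Eq.symm rfl) = x.hom
    simpa using decChosen_comp L hL x y u⟩⟩

section Aux

lemma dec_comp_val {x y z : Dec A} (u : x ⟶ y) (v : y ⟶ z) : (u ≫ v).1 = u.1 ≫ v.1 := rfl

lemma dec_eqToHom_val {x y : Dec A} (h : x = y) :
    (eqToHom h).1 = eqToHom (congrArg Dec.src h) := by subst h; rfl

lemma DecExt {x y : Dec A} (hb : x.base = y.base) (hs : x.src = y.src)
    (hh : x.hom ≫ eqToHom hb = eqToHom hs ≫ y.hom) : x = y := by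
  cases x; cases y
  dsimp at hb hs
  subst hb; subst hs
  simpa using hh

variable (L : DeltaLens A B) (hL : L.IsSplitOpfibration)

lemma decChosen_spec_map (x : Dec A) (y : Dec B) (u : (DecMap L.f).obj x ⟶ y)
    (h : L.f.obj x.base = y.base) :
    L.f.map (decChosen L hL x y u) ≫ eqToHom h =
      eqToHom (L.f_p x.src y.src u.1) ≫ y.hom := by
  have := (Classical.choose_spec
    (hL x.src y.src u.1 x.base x.hom (y.hom ≫ eqToHom u.2.choose.symm)
      u.2.choose_spec)).1.1
  unfold decChosen
  rw [this]; simp only [Category.assoc]; erw [eqToHom_trans, eqToHom_refl, Category.comp_id]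

lemma decChosen_uniq (x : Dec A) (y : Dec B) (u : (DecMap L.f).obj x ⟶ y)
    (ψ : L.p x.src y.src u.1 ⟶ x.base) (h : L.f.obj x.base = y.base)
    (h1 : L.f.map ψ ≫ eqToHom h = eqToHom (L.f_p x.src y.src u.1) ≫ y.hom)
    (h2 : L.lift x.src y.src u.1 ≫ ψ = x.hom) : ψ = decChosen L hL x y u := by
  refine (Classical.choose_spec
    (hL x.src y.src u.1 x.base x.hom (y.hom ≫ eqToHom u.2.choose.symm)
      u.2.choose_spec)).2 ψ ⟨?_, h2⟩
  have : L.f.map ψ = (eqToHom (L.f_p x.src y.src u.1) ≫ y.hom) ≫ eqToHom h.symm := by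
    rw [← h1]; simp
  rw [this]; simp

lemma DLf_p (x : Dec A) (y : Dec B) (u : (DecMap L.f).obj x ⟶ y) :
    (DecMap L.f).obj (decP L hL x y u) = y :=
  DecExt u.2.choose (L.f_p x.src y.src u.1) (decChosen_spec_map L hL x y u u.2.choose)

lemma DLf_lift (x : Dec A) (y : Dec B) (u : (DecMap L.f).obj x ⟶ y)
    (h : (DecMap L.f).obj (decP L hL x y u) = y) :
    (DecMap L.f).map (decLift L hL x y u) ≫ eqToHom h = u := by
  apply Subtype.ext
  rw [dec_comp_val, dec_eqToHom_val]
  exact L.f_lift x.src y.src u.1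

lemma DLp_id (x : Dec A) (u : (DecMap L.f).obj x ⟶ (DecMap L.f).obj x)
    (hu : u.1 = 𝟙 (L.f.obj x.src)) : decP L hL x ((DecMap L.f).obj x) u = x := by
  obtain ⟨u1, hu2⟩ := u
  dsimp at hu
  subst hu
  refine DecExt rfl (L.p_id x.src) ?_
  simp only [eqToHom_refl, Category.comp_id]
  refine (Category.comp_id _).trans ?_
  refine (decChosen_uniq L hL x ((DecMap L.f).obj x) ⟨𝟙 _, hu2⟩
    (eqToHom (L.p_id x.src) ≫ x.hom) rfl ?_ ?_).symm
  · simp only [Functor.map_comp, eqToHom_map, eqToHom_refl, Category.comp_id]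
    erw [eqToHom_map, eqToHom_refl, Category.comp_id]
    rfl
  · rw [← Category.assoc]
    show (L.lift x.src (L.f.obj x.src) (𝟙 (L.f.obj x.src)) ≫ eqToHom (L.p_id x.src)) ≫
      x.hom = x.hom
    rw [L.lift_id, Category.id_comp]

lemma DLlift_id (x : Dec A) (u : (DecMap L.f).obj x ⟶ (DecMap L.f).obj x)
    (hu : u.1 = 𝟙 (L.f.obj x.src)) (h : decP L hL x ((DecMap L.f).obj x) u = x) :
    decLift L hL x ((DecMap L.f).obj x) u ≫ eqToHom h = 𝟙 x := by
  apply Subtype.ext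
  rw [dec_comp_val, dec_eqToHom_val]
  obtain ⟨u1, hu2⟩ := u
  dsimp at hu
  subst hu
  exact L.lift_id x.src

lemma DLp_comp (x : Dec A) (b b' : Dec B) (u : (DecMap L.f).obj x ⟶ b) (v : b ⟶ b')
    (w : (DecMap L.f).obj (decP L hL x b u) ⟶ b')
    (hw : w.1 = eqToHom (L.f_p x.src b.src u.1) ≫ v.1) :
    decP L hL x b' (u ≫ v) = decP L hL (decP L hL x b u) b' w := by
  obtain ⟨w1, hw2⟩ := w
  dsimp at hw
  subst hw
  refine DecExt rfl (L.p_comp x.src b.src b'.src u.1 v.1) ?_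
  erw [eqToHom_refl, Category.comp_id]
  refine (decChosen_uniq L hL x b' (u ≫ v)
    (eqToHom (L.p_comp x.src b.src b'.src u.1 v.1) ≫
      decChosen L hL (decP L hL x b u) b' ⟨eqToHom (L.f_p x.src b.src u.1) ≫ v.1, hw2⟩)
    (u ≫ v).2.choose ?_ ?_).symm
  · erw [L.f.map_comp, eqToHom_map, Category.assoc,
      decChosen_spec_map L hL (decP L hL x b u) b' _ (u ≫ v).2.choose]
    simp
    exact (eqToHom_trans_assoc _ _ _).trans rfl
  · show L.lift x.src b'.src (u.1 ≫ v.1) ≫ _ = x.hom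
    have hc := decChosen_comp L hL (decP L hL x b u) b'
      ⟨eqToHom (L.f_p x.src b.src u.1) ≫ v.1, hw2⟩
    dsimp only [decP] at hc ⊢
    erw [← Category.assoc, L.lift_comp, Category.assoc, hc]
    exact decChosen_comp L hL x b u

lemma DLlift_comp (x : Dec A) (b b' : Dec B) (u : (DecMap L.f).obj x ⟶ b) (v : b ⟶ b')
    (w : (DecMap L.f).obj (decP L hL x b u) ⟶ b')
    (hw : w.1 = eqToHom (L.f_p x.src b.src u.1) ≫ v.1)
    (h : decP L hL x b' (u ≫ v) = decP L hL (decP L hL x b u) b' w) :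
    decLift L hL x b' (u ≫ v) ≫ eqToHom h =
      decLift L hL x b u ≫ decLift L hL (decP L hL x b u) b' w := by
  apply Subtype.ext
  rw [dec_comp_val, dec_eqToHom_val]
  obtain ⟨w1, hw2⟩ := w
  dsimp at hw
  subst hw
  exact L.lift_comp x.src b.src b'.src u.1 v.1

lemma dec_eqToHom_comp_val (x : Dec A) (b b' : Dec B) (u : (DecMap L.f).obj x ⟶ b)
    (v : b ⟶ b') (h : (DecMap L.f).obj (decP L hL x b u) = b) :
    (eqToHom h ≫ v).1 = eqToHom (L.f_p x.src b.src u.1) ≫ v.1 := by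
  rw [dec_comp_val, dec_eqToHom_val]
  rfl

end Aux

/-- If `(f, φ) : A ⇄ B` is a split opfibration then the right décalage
`Df : DA ⥤ DB` carries a delta lens structure, whose chosen lifts are the triangles
formed by the chosen lifts of `(f, φ)` and the unique fill-in morphisms. -/
theorem decalage_deltaLens (L : DeltaLens A B) (hL : L.IsSplitOpfibration) :
    ∃ DL : DeltaLens (Dec A) (Dec B),
      DL.f = DecMap L.f ∧ HEq DL.p (decP L hL) ∧ HEq DL.lift (decLift L hL) :=
  ⟨{ f := DecMap L.f
     p := decP L hL
     lift := decLift L hL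
     f_p := DLf_p L hL
     f_lift := fun x y u => DLf_lift L hL x y u _
     p_id := fun x => DLp_id L hL x _ rfl
     lift_id := fun x => DLlift_id L hL x _ rfl _
     p_comp := fun x b b' u v =>
       DLp_comp L hL x b b' u v _ (dec_eqToHom_comp_val L hL x b b' u v _)
     lift_comp := fun x b b' u v =>
       DLlift_comp L hL x b b' u v _ (dec_eqToHom_comp_val L hL x b b' u v _) _ },
   rfl, HEq.rfl, HEq.rfl⟩
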